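/- Let t be a positive integer with t + 1 ≥ 3, let v = 4(t+1), m = ⌊(t+1)/6⌋, and m' = v − 24m (so m' ∈ {0, 4, 8, 12, 16, 20}). Then there exists a balanced companion family on {1,…,v} whose worst-case total set discrepancy under magnitude-1 swaps is at most 12m + Δ, where Δ = −2, 2, 4, 6, 6, 8 according as m' = 0, 4, 8, 12, 16, 20, respectively. -/

import Mathlib

/-- An (indexed) balanced companion family on `{1,…,4(t+1)}`: pairwise disjoint
2-element subsets `S 1, …, S (2t+2)` of `{1,…,4(t+1)}` whose union is all of
`{1,…,4(t+1)}`, such that for each `i = 1,…,t+1` the companion sets `S (2i-1)`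
and `S (2i)` have equal element sums. -/
def IsBalancedCompanionFamily (t : ℕ) (S : ℕ → Finset ℕ) : Prop :=
  (∀ i ∈ Finset.Icc 1 (2*t+2), S i ⊆ Finset.Icc 1 (4*(t+1)) ∧ (S i).card = 2) ∧
  (∀ i ∈ Finset.Icc 1 (2*t+2), ∀ j ∈ Finset.Icc 1 (2*t+2),
    i ≠ j → Disjoint (S i) (S j)) ∧
  (Finset.Icc 1 (2*t+2)).biUnion S = Finset.Icc 1 (4*(t+1)) ∧
  ∀ i ∈ Finset.Icc 1 (t+1), (S (2*i-1)).sum id = (S (2*i)).sum id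

/-- A collection of popularity swaps of magnitude `p` on `{1,…,v}`: a permutation
`π` of `{1,…,v}` with `π ∘ π = id` and `|π i − i| ≤ p` for every `i ∈ {1,…,v}`. -/
def IsSwapCollection (v p : ℕ) (π : ℕ → ℕ) : Prop :=
  (∀ i ∈ Finset.Icc 1 v, π i ∈ Finset.Icc 1 v) ∧
  (∀ i ∈ Finset.Icc 1 v, π (π i) = i) ∧
  (∀ i ∈ Finset.Icc 1 v, |(π i : ℤ) - (i : ℤ)| ≤ (p : ℤ))

/-- The total set discrepancy of the family `S` under the swap collection `π`:
`∑_{i=1}^{t+1} |∑_{x ∈ S (2i-1)} π x − ∑_{x ∈ S (2i)} π x|`. -/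
def totalSetDiscrepancy (t : ℕ) (S : ℕ → Finset ℕ) (π : ℕ → ℕ) : ℤ :=
  ∑ i ∈ Finset.Icc 1 (t+1),
    |((S (2*i-1)).sum fun x => (π x : ℤ)) - ((S (2*i)).sum fun x => (π x : ℤ))|



def dpF (w : ℕ → ℤ) : ℕ → ℤ × ℤ
  | 0 => (0, w 0)
  | J+1 => (max (dpF w J).1 (dpF w J).2, (dpF w J).1 + w (J+1))

lemma dp_le (w : ℕ → ℤ) (ε : ℕ → ℤ) (hε : ∀ j, ε j = 0 ∨ ε j = 1)
    (hadj : ∀ j, ε j * ε (j+1) = 0) :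
    ∀ J, (ε J = 0 → ∑ j ∈ Finset.range (J+1), w j * ε j ≤ (dpF w J).1) ∧
         (ε J = 1 → ∑ j ∈ Finset.range (J+1), w j * ε j ≤ (dpF w J).2) := by
  intro J
  induction J with
  | zero =>
    constructor
    · intro h0; simp [dpF, h0]
    · intro h1; simp [dpF, h1]
  | succ J ih =>
    have hsum : ∑ j ∈ Finset.range (J+1+1), w j * ε j
        = (∑ j ∈ Finset.range (J+1), w j * ε j) + w (J+1) * ε (J+1) :=
      Finset.sum_range_succ _ _
    constructor
    · intro h0
      rw [hsum, h0, mul_zero, add_zero]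
      rcases hε J with h | h
      · exact le_trans (ih.1 h) (le_max_left _ _)
      · exact le_trans (ih.2 h) (le_max_right _ _)
    · intro h1
      have hJ0 : ε J = 0 := by
        have := hadj J
        rw [h1, mul_one] at this
        exact this
      rw [hsum, h1, mul_one]
      exact add_le_add (ih.1 hJ0) le_rfl

lemma abs_pick (x : ℤ) : ∃ s : ℤ, (s = 1 ∨ s = -1) ∧ |x| = s * x := by
  rcases le_or_gt 0 x with h | h
  · exact ⟨1, Or.inl rfl, by rw [abs_of_nonneg h, one_mul]⟩
  · exact ⟨-1, Or.inr rfl, by rw [abs_of_neg h]; ring⟩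

lemma block_core (B : ℤ) (K : ℕ) (w ε : ℕ → ℤ)
    (hε : ∀ j, ε j = 0 ∨ ε j = 1) (hadj : ∀ j, ε j * ε (j+1) = 0)
    (hw0 : w 0 ≤ 1) (hwT : w (K+2) ≤ 1)
    (hdp1 : (dpF (fun j => w (j+1)) K).1 ≤ B)
    (hdp2 : (dpF (fun j => w (j+1)) K).2 ≤ B) :
    ∑ j ∈ Finset.range (K+3), w j * ε j ≤ B + ε 0 + ε (K+2) := by
  have hsplit : ∑ j ∈ Finset.range (K+3), w j * ε j
      = w 0 * ε 0 + (∑ j ∈ Finset.range (K+1), w (j+1) * ε (j+1)) + w (K+2) * ε (K+2) := by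
    rw [Finset.sum_range_succ, Finset.sum_range_succ' (fun j => w j * ε j) (K+1)]
    ring
  have hmid : ∑ j ∈ Finset.range (K+1), w (j+1) * ε (j+1) ≤ B := by
    have h := dp_le (fun j => w (j+1)) (fun j => ε (j+1))
      (fun j => hε (j+1)) (fun j => hadj (j+1)) K
    rcases hε (K+1) with h0 | h1
    · exact le_trans (h.1 h0) hdp1
    · exact le_trans (h.2 h1) hdp2
  have hb0 : w 0 * ε 0 ≤ ε 0 := by
    rcases hε 0 with h | h
    · rw [h, mul_zero]
    · rw [h, mul_one]; exact hw0
  have hbT : w (K+2) * ε (K+2) ≤ ε (K+2) := by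
    rcases hε (K+2) with h | h
    · rw [h, mul_zero]
    · rw [h, mul_one]; exact hwT
  rw [hsplit]; linarith


def tv1 (σ0 : ℤ) (j : ℕ) : ℤ :=
  if j = 1 ∨ j = 4 then σ0 else if j = 2 ∨ j = 3 then -σ0 else 0

lemma block1 (c : ℕ) (e : ℕ → ℤ) (hε : ∀ j, e j = 0 ∨ e j = 1)
    (hadj : ∀ j, e j * e (j+1) = 0) :
    |(((e (c+1) - e (c+0)) + (e (c+4) - e (c+3))) - ((e (c+2) - e (c+1)) + (e (c+3) - e (c+2))))| ≤ 2 + e (c+0) + e (c+4) := by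
  obtain ⟨σ0, hσ0, habs0⟩ := abs_pick (((e (c+1) - e (c+0)) + (e (c+4) - e (c+3))) - ((e (c+2) - e (c+1)) + (e (c+3) - e (c+2))))
  rw [habs0]
  have hid : σ0 * (((e (c+1) - e (c+0)) + (e (c+4) - e (c+3))) - ((e (c+2) - e (c+1)) + (e (c+3) - e (c+2))))
      = ∑ j ∈ Finset.range 5, (fun j => tv1 σ0 j - tv1 σ0 (j+1)) j * (fun j => e (c+j)) j := by
    simp [Finset.sum_range_succ, tv1]
    ring
  rw [hid]
  rcases hσ0 with rfl | rfl <;>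
    exact block_core 2 2 _ _ (fun j => hε (c+j)) (fun j => by simpa [Nat.add_assoc] using hadj (c+j))
      (by norm_num [tv1]) (by norm_num [tv1]) (by decide) (by decide)

def tv2 (σ0 σ1 : ℤ) (j : ℕ) : ℤ :=
  if j = 1 ∨ j = 8 then σ0 else if j = 3 ∨ j = 6 then -σ0 else if j = 2 ∨ j = 7 then σ1 else if j = 4 ∨ j = 5 then -σ1 else 0

lemma block2 (c : ℕ) (e : ℕ → ℤ) (hε : ∀ j, e j = 0 ∨ e j = 1)
    (hadj : ∀ j, e j * e (j+1) = 0) :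
    |(((e (c+1) - e (c+0)) + (e (c+8) - e (c+7))) - ((e (c+3) - e (c+2)) + (e (c+6) - e (c+5))))| + |(((e (c+2) - e (c+1)) + (e (c+7) - e (c+6))) - ((e (c+4) - e (c+3)) + (e (c+5) - e (c+4))))| ≤ 4 + e (c+0) + e (c+8) := by
  obtain ⟨σ0, hσ0, habs0⟩ := abs_pick (((e (c+1) - e (c+0)) + (e (c+8) - e (c+7))) - ((e (c+3) - e (c+2)) + (e (c+6) - e (c+5))))
  obtain ⟨σ1, hσ1, habs1⟩ := abs_pick (((e (c+2) - e (c+1)) + (e (c+7) - e (c+6))) - ((e (c+4) - e (c+3)) + (e (c+5) - e (c+4))))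
  rw [habs0, habs1]
  have hid : σ0 * (((e (c+1) - e (c+0)) + (e (c+8) - e (c+7))) - ((e (c+3) - e (c+2)) + (e (c+6) - e (c+5)))) + σ1 * (((e (c+2) - e (c+1)) + (e (c+7) - e (c+6))) - ((e (c+4) - e (c+3)) + (e (c+5) - e (c+4))))
      = ∑ j ∈ Finset.range 9, (fun j => tv2 σ0 σ1 j - tv2 σ0 σ1 (j+1)) j * (fun j => e (c+j)) j := by
    simp [Finset.sum_range_succ, tv2]
    ring
  rw [hid]
  rcases hσ0 with rfl | rfl <;> rcases hσ1 with rfl | rfl <;>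
    exact block_core 4 6 _ _ (fun j => hε (c+j)) (fun j => by simpa [Nat.add_assoc] using hadj (c+j))
      (by norm_num [tv2]) (by norm_num [tv2]) (by decide) (by decide)

def tv3 (σ0 σ1 σ2 : ℤ) (j : ℕ) : ℤ :=
  if j = 1 ∨ j = 6 then σ0 else if j = 3 ∨ j = 4 then -σ0 else if j = 2 ∨ j = 11 then σ1 else if j = 5 ∨ j = 8 then -σ1 else if j = 7 ∨ j = 12 then σ2 else if j = 9 ∨ j = 10 then -σ2 else 0

lemma block3 (c : ℕ) (e : ℕ → ℤ) (hε : ∀ j, e j = 0 ∨ e j = 1)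
    (hadj : ∀ j, e j * e (j+1) = 0) :
    |(((e (c+1) - e (c+0)) + (e (c+6) - e (c+5))) - ((e (c+3) - e (c+2)) + (e (c+4) - e (c+3))))| + |(((e (c+2) - e (c+1)) + (e (c+11) - e (c+10))) - ((e (c+5) - e (c+4)) + (e (c+8) - e (c+7))))| + |(((e (c+7) - e (c+6)) + (e (c+12) - e (c+11))) - ((e (c+9) - e (c+8)) + (e (c+10) - e (c+9))))| ≤ 6 + e (c+0) + e (c+12) := by
  obtain ⟨σ0, hσ0, habs0⟩ := abs_pick (((e (c+1) - e (c+0)) + (e (c+6) - e (c+5))) - ((e (c+3) - e (c+2)) + (e (c+4) - e (c+3))))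
  obtain ⟨σ1, hσ1, habs1⟩ := abs_pick (((e (c+2) - e (c+1)) + (e (c+11) - e (c+10))) - ((e (c+5) - e (c+4)) + (e (c+8) - e (c+7))))
  obtain ⟨σ2, hσ2, habs2⟩ := abs_pick (((e (c+7) - e (c+6)) + (e (c+12) - e (c+11))) - ((e (c+9) - e (c+8)) + (e (c+10) - e (c+9))))
  rw [habs0, habs1, habs2]
  have hid : σ0 * (((e (c+1) - e (c+0)) + (e (c+6) - e (c+5))) - ((e (c+3) - e (c+2)) + (e (c+4) - e (c+3)))) + σ1 * (((e (c+2) - e (c+1)) + (e (c+11) - e (c+10))) - ((e (c+5) - e (c+4)) + (e (c+8) - e (c+7)))) + σ2 * (((e (c+7) - e (c+6)) + (e (c+12) - e (c+11))) - ((e (c+9) - e (c+8)) + (e (c+10) - e (c+9))))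
      = ∑ j ∈ Finset.range 13, (fun j => tv3 σ0 σ1 σ2 j - tv3 σ0 σ1 σ2 (j+1)) j * (fun j => e (c+j)) j := by
    simp [Finset.sum_range_succ, tv3]
    ring
  rw [hid]
  rcases hσ0 with rfl | rfl <;> rcases hσ1 with rfl | rfl <;> rcases hσ2 with rfl | rfl <;>
    exact block_core 6 10 _ _ (fun j => hε (c+j)) (fun j => by simpa [Nat.add_assoc] using hadj (c+j))
      (by norm_num [tv3]) (by norm_num [tv3]) (by decide) (by decide)

def tv4 (σ0 σ1 σ2 σ3 : ℤ) (j : ℕ) : ℤ :=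
  if j = 1 ∨ j = 16 then σ0 else if j = 8 ∨ j = 9 then -σ0 else if j = 3 ∨ j = 14 then σ1 else if j = 6 ∨ j = 11 then -σ1 else if j = 2 ∨ j = 7 then σ2 else if j = 4 ∨ j = 5 then -σ2 else if j = 10 ∨ j = 15 then σ3 else if j = 12 ∨ j = 13 then -σ3 else 0

lemma block4 (c : ℕ) (e : ℕ → ℤ) (hε : ∀ j, e j = 0 ∨ e j = 1)
    (hadj : ∀ j, e j * e (j+1) = 0) :
    |(((e (c+1) - e (c+0)) + (e (c+16) - e (c+15))) - ((e (c+8) - e (c+7)) + (e (c+9) - e (c+8))))| + |(((e (c+3) - e (c+2)) + (e (c+14) - e (c+13))) - ((e (c+6) - e (c+5)) + (e (c+11) - e (c+10))))| + |(((e (c+2) - e (c+1)) + (e (c+7) - e (c+6))) - ((e (c+4) - e (c+3)) + (e (c+5) - e (c+4))))| + |(((e (c+10) - e (c+9)) + (e (c+15) - e (c+14))) - ((e (c+12) - e (c+11)) + (e (c+13) - e (c+12))))| ≤ 6 + e (c+0) + e (c+16) := by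
  obtain ⟨σ0, hσ0, habs0⟩ := abs_pick (((e (c+1) - e (c+0)) + (e (c+16) - e (c+15))) - ((e (c+8) - e (c+7)) + (e (c+9) - e (c+8))))
  obtain ⟨σ1, hσ1, habs1⟩ := abs_pick (((e (c+3) - e (c+2)) + (e (c+14) - e (c+13))) - ((e (c+6) - e (c+5)) + (e (c+11) - e (c+10))))
  obtain ⟨σ2, hσ2, habs2⟩ := abs_pick (((e (c+2) - e (c+1)) + (e (c+7) - e (c+6))) - ((e (c+4) - e (c+3)) + (e (c+5) - e (c+4))))
  obtain ⟨σ3, hσ3, habs3⟩ := abs_pick (((e (c+10) - e (c+9)) + (e (c+15) - e (c+14))) - ((e (c+12) - e (c+11)) + (e (c+13) - e (c+12))))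
  rw [habs0, habs1, habs2, habs3]
  have hid : σ0 * (((e (c+1) - e (c+0)) + (e (c+16) - e (c+15))) - ((e (c+8) - e (c+7)) + (e (c+9) - e (c+8)))) + σ1 * (((e (c+3) - e (c+2)) + (e (c+14) - e (c+13))) - ((e (c+6) - e (c+5)) + (e (c+11) - e (c+10)))) + σ2 * (((e (c+2) - e (c+1)) + (e (c+7) - e (c+6))) - ((e (c+4) - e (c+3)) + (e (c+5) - e (c+4)))) + σ3 * (((e (c+10) - e (c+9)) + (e (c+15) - e (c+14))) - ((e (c+12) - e (c+11)) + (e (c+13) - e (c+12))))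
      = ∑ j ∈ Finset.range 17, (fun j => tv4 σ0 σ1 σ2 σ3 j - tv4 σ0 σ1 σ2 σ3 (j+1)) j * (fun j => e (c+j)) j := by
    simp [Finset.sum_range_succ, tv4]
    ring
  rw [hid]
  rcases hσ0 with rfl | rfl <;> rcases hσ1 with rfl | rfl <;> rcases hσ2 with rfl | rfl <;> rcases hσ3 with rfl | rfl <;>
    exact block_core 6 14 _ _ (fun j => hε (c+j)) (fun j => by simpa [Nat.add_assoc] using hadj (c+j))
      (by norm_num [tv4]) (by norm_num [tv4]) (by decide) (by decide)

def tv5 (σ0 σ1 σ2 σ3 σ4 : ℤ) (j : ℕ) : ℤ :=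
  if j = 7 ∨ j = 14 then σ0 else if j = 1 ∨ j = 20 then -σ0 else if j = 11 ∨ j = 12 then σ1 else if j = 4 ∨ j = 19 then -σ1 else if j = 13 ∨ j = 18 then σ2 else if j = 15 ∨ j = 16 then -σ2 else if j = 5 ∨ j = 6 then σ3 else if j = 3 ∨ j = 8 then -σ3 else if j = 9 ∨ j = 10 then σ4 else if j = 2 ∨ j = 17 then -σ4 else 0

lemma block5 (c : ℕ) (e : ℕ → ℤ) (hε : ∀ j, e j = 0 ∨ e j = 1)
    (hadj : ∀ j, e j * e (j+1) = 0) :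
    |(((e (c+7) - e (c+6)) + (e (c+14) - e (c+13))) - ((e (c+1) - e (c+0)) + (e (c+20) - e (c+19))))| + |(((e (c+11) - e (c+10)) + (e (c+12) - e (c+11))) - ((e (c+4) - e (c+3)) + (e (c+19) - e (c+18))))| + |(((e (c+13) - e (c+12)) + (e (c+18) - e (c+17))) - ((e (c+15) - e (c+14)) + (e (c+16) - e (c+15))))| + |(((e (c+5) - e (c+4)) + (e (c+6) - e (c+5))) - ((e (c+3) - e (c+2)) + (e (c+8) - e (c+7))))| + |(((e (c+9) - e (c+8)) + (e (c+10) - e (c+9))) - ((e (c+2) - e (c+1)) + (e (c+17) - e (c+16))))| ≤ 8 + e (c+0) + e (c+20) := by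
  obtain ⟨σ0, hσ0, habs0⟩ := abs_pick (((e (c+7) - e (c+6)) + (e (c+14) - e (c+13))) - ((e (c+1) - e (c+0)) + (e (c+20) - e (c+19))))
  obtain ⟨σ1, hσ1, habs1⟩ := abs_pick (((e (c+11) - e (c+10)) + (e (c+12) - e (c+11))) - ((e (c+4) - e (c+3)) + (e (c+19) - e (c+18))))
  obtain ⟨σ2, hσ2, habs2⟩ := abs_pick (((e (c+13) - e (c+12)) + (e (c+18) - e (c+17))) - ((e (c+15) - e (c+14)) + (e (c+16) - e (c+15))))
  obtain ⟨σ3, hσ3, habs3⟩ := abs_pick (((e (c+5) - e (c+4)) + (e (c+6) - e (c+5))) - ((e (c+3) - e (c+2)) + (e (c+8) - e (c+7))))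
  obtain ⟨σ4, hσ4, habs4⟩ := abs_pick (((e (c+9) - e (c+8)) + (e (c+10) - e (c+9))) - ((e (c+2) - e (c+1)) + (e (c+17) - e (c+16))))
  rw [habs0, habs1, habs2, habs3, habs4]
  have hid : σ0 * (((e (c+7) - e (c+6)) + (e (c+14) - e (c+13))) - ((e (c+1) - e (c+0)) + (e (c+20) - e (c+19)))) + σ1 * (((e (c+11) - e (c+10)) + (e (c+12) - e (c+11))) - ((e (c+4) - e (c+3)) + (e (c+19) - e (c+18)))) + σ2 * (((e (c+13) - e (c+12)) + (e (c+18) - e (c+17))) - ((e (c+15) - e (c+14)) + (e (c+16) - e (c+15)))) + σ3 * (((e (c+5) - e (c+4)) + (e (c+6) - e (c+5))) - ((e (c+3) - e (c+2)) + (e (c+8) - e (c+7)))) + σ4 * (((e (c+9) - e (c+8)) + (e (c+10) - e (c+9))) - ((e (c+2) - e (c+1)) + (e (c+17) - e (c+16))))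
      = ∑ j ∈ Finset.range 21, (fun j => tv5 σ0 σ1 σ2 σ3 σ4 j - tv5 σ0 σ1 σ2 σ3 σ4 (j+1)) j * (fun j => e (c+j)) j := by
    simp [Finset.sum_range_succ, tv5]
    ring
  rw [hid]
  rcases hσ0 with rfl | rfl <;> rcases hσ1 with rfl | rfl <;> rcases hσ2 with rfl | rfl <;> rcases hσ3 with rfl | rfl <;> rcases hσ4 with rfl | rfl <;>
    exact block_core 8 18 _ _ (fun j => hε (c+j)) (fun j => by simpa [Nat.add_assoc] using hadj (c+j))
      (by norm_num [tv5]) (by norm_num [tv5]) (by decide) (by decide)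

def tv6 (σ0 σ1 σ2 σ3 σ4 σ5 : ℤ) (j : ℕ) : ℤ :=
  if j = 7 ∨ j = 20 then σ0 else if j = 10 ∨ j = 17 then -σ0 else if j = 1 ∨ j = 24 then σ1 else if j = 12 ∨ j = 13 then -σ1 else if j = 3 ∨ j = 8 then σ2 else if j = 5 ∨ j = 6 then -σ2 else if j = 4 ∨ j = 9 then σ3 else if j = 2 ∨ j = 11 then -σ3 else if j = 15 ∨ j = 22 then σ4 else if j = 18 ∨ j = 19 then -σ4 else if j = 14 ∨ j = 23 then σ5 else if j = 16 ∨ j = 21 then -σ5 else 0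

lemma block6 (c : ℕ) (e : ℕ → ℤ) (hε : ∀ j, e j = 0 ∨ e j = 1)
    (hadj : ∀ j, e j * e (j+1) = 0) :
    |(((e (c+7) - e (c+6)) + (e (c+20) - e (c+19))) - ((e (c+10) - e (c+9)) + (e (c+17) - e (c+16))))| + |(((e (c+1) - e (c+0)) + (e (c+24) - e (c+23))) - ((e (c+12) - e (c+11)) + (e (c+13) - e (c+12))))| + |(((e (c+3) - e (c+2)) + (e (c+8) - e (c+7))) - ((e (c+5) - e (c+4)) + (e (c+6) - e (c+5))))| + |(((e (c+4) - e (c+3)) + (e (c+9) - e (c+8))) - ((e (c+2) - e (c+1)) + (e (c+11) - e (c+10))))| + |(((e (c+15) - e (c+14)) + (e (c+22) - e (c+21))) - ((e (c+18) - e (c+17)) + (e (c+19) - e (c+18))))| + |(((e (c+14) - e (c+13)) + (e (c+23) - e (c+22))) - ((e (c+16) - e (c+15)) + (e (c+21) - e (c+20))))| ≤ 10 + e (c+0) + e (c+24) := by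
  obtain ⟨σ0, hσ0, habs0⟩ := abs_pick (((e (c+7) - e (c+6)) + (e (c+20) - e (c+19))) - ((e (c+10) - e (c+9)) + (e (c+17) - e (c+16))))
  obtain ⟨σ1, hσ1, habs1⟩ := abs_pick (((e (c+1) - e (c+0)) + (e (c+24) - e (c+23))) - ((e (c+12) - e (c+11)) + (e (c+13) - e (c+12))))
  obtain ⟨σ2, hσ2, habs2⟩ := abs_pick (((e (c+3) - e (c+2)) + (e (c+8) - e (c+7))) - ((e (c+5) - e (c+4)) + (e (c+6) - e (c+5))))
  obtain ⟨σ3, hσ3, habs3⟩ := abs_pick (((e (c+4) - e (c+3)) + (e (c+9) - e (c+8))) - ((e (c+2) - e (c+1)) + (e (c+11) - e (c+10))))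
  obtain ⟨σ4, hσ4, habs4⟩ := abs_pick (((e (c+15) - e (c+14)) + (e (c+22) - e (c+21))) - ((e (c+18) - e (c+17)) + (e (c+19) - e (c+18))))
  obtain ⟨σ5, hσ5, habs5⟩ := abs_pick (((e (c+14) - e (c+13)) + (e (c+23) - e (c+22))) - ((e (c+16) - e (c+15)) + (e (c+21) - e (c+20))))
  rw [habs0, habs1, habs2, habs3, habs4, habs5]
  have hid : σ0 * (((e (c+7) - e (c+6)) + (e (c+20) - e (c+19))) - ((e (c+10) - e (c+9)) + (e (c+17) - e (c+16)))) + σ1 * (((e (c+1) - e (c+0)) + (e (c+24) - e (c+23))) - ((e (c+12) - e (c+11)) + (e (c+13) - e (c+12)))) + σ2 * (((e (c+3) - e (c+2)) + (e (c+8) - e (c+7))) - ((e (c+5) - e (c+4)) + (e (c+6) - e (c+5)))) + σ3 * (((e (c+4) - e (c+3)) + (e (c+9) - e (c+8))) - ((e (c+2) - e (c+1)) + (e (c+11) - e (c+10)))) + σ4 * (((e (c+15) - e (c+14)) + (e (c+22) - e (c+21))) - ((e (c+18) - e (c+17)) + (e (c+19) - e (c+18)))) + σ5 * (((e (c+14)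 - e (c+13)) + (e (c+23) - e (c+22))) - ((e (c+16) - e (c+15)) + (e (c+21) - e (c+20))))
      = ∑ j ∈ Finset.range 25, (fun j => tv6 σ0 σ1 σ2 σ3 σ4 σ5 j - tv6 σ0 σ1 σ2 σ3 σ4 σ5 (j+1)) j * (fun j => e (c+j)) j := by
    simp [Finset.sum_range_succ, tv6]
    ring
  rw [hid]
  rcases hσ0 with rfl | rfl <;> rcases hσ1 with rfl | rfl <;> rcases hσ2 with rfl | rfl <;> rcases hσ3 with rfl | rfl <;> rcases hσ4 with rfl | rfl <;> rcases hσ5 with rfl | rfl <;>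
    exact block_core 10 22 _ _ (fun j => hε (c+j)) (fun j => by simpa [Nat.add_assoc] using hadj (c+j))
      (by norm_num [tv6]) (by norm_num [tv6]) (by decide) (by decide)


/-- first (plus-sign) set of companion pair `ℓ` in the gadget of size `s` -/
def gA : ℕ → ℕ → ℕ × ℕ
  | 1, 0 => (1,4)
  | 2, 0 => (1,8) | 2, 1 => (2,7)
  | 3, 0 => (1,6) | 3, 1 => (2,11) | 3, 2 => (7,12)
  | 4, 0 => (1,16) | 4, 1 => (3,14) | 4, 2 => (2,7) | 4, 3 => (10,15)
  | 5, 0 => (7,14) | 5, 1 => (11,12) | 5, 2 => (13,18) | 5, 3 => (5,6) | 5, 4 => (9,10)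
  | 6, 0 => (7,20) | 6, 1 => (1,24) | 6, 2 => (3,8) | 6, 3 => (4,9) | 6, 4 => (15,22) | 6, 5 => (14,23)
  | _, _ => (0,0)

/-- second (minus-sign) set of companion pair `ℓ` in the gadget of size `s` -/
def gB : ℕ → ℕ → ℕ × ℕ
  | 1, 0 => (2,3)
  | 2, 0 => (3,6) | 2, 1 => (4,5)
  | 3, 0 => (3,4) | 3, 1 => (5,8) | 3, 2 => (9,10)
  | 4, 0 => (8,9) | 4, 1 => (6,11) | 4, 2 => (4,5) | 4, 3 => (12,13)
  | 5, 0 => (1,20) | 5, 1 => (4,19) | 5, 2 => (15,16) | 5, 3 => (3,8) | 5, 4 => (2,17)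
  | 6, 0 => (10,17) | 6, 1 => (12,13) | 6, 2 => (5,6) | 6, 3 => (2,11) | 6, 4 => (18,19) | 6, 5 => (16,21)
  | _, _ => (0,0)

/-- the `k`-th element of the gadget of size `s` (k = 4ℓ+slot) -/
def entv (s k : ℕ) : ℕ :=
  match k % 4 with
  | 0 => (gA s (k/4)).1
  | 1 => (gA s (k/4)).2
  | 2 => (gB s (k/4)).1
  | _ => (gB s (k/4)).2

lemma gF2 : ∀ s, s ≤ 6 → ∀ k, k < 4*s → 1 ≤ entv s k ∧ entv s k ≤ 4*s := by decide
lemma gF3 : ∀ s, s ≤ 6 → ∀ k, k < 4*s → ∀ k', k' < 4*s → k ≠ k' → entv s k ≠ entv s k' := by decide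
lemma gF4 : ∀ s, s ≤ 6 → ∀ u, 1 ≤ u → u ≤ 4*s → ∃ k, k < 4*s ∧ entv s k = u := by decide
lemma gF5 : ∀ s, s ≤ 6 → ∀ l, l < s →
    entv s (4*l) + entv s (4*l+1) = entv s (4*l+2) + entv s (4*l+3) := by decide

/-- pair index of set index j -/
def fsi (j : ℕ) : ℕ := (j+1)/2
/-- offset of the block containing pair i -/
def fsc (m j : ℕ) : ℕ := if fsi j ≤ 6*m then 24*((fsi j - 1)/6) else 24*m
/-- gadget size for set index j -/
def fss (m r j : ℕ) : ℕ := if fsi j ≤ 6*m then 6 else r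
/-- element index within gadget -/
def fsk (m j : ℕ) : ℕ :=
  (if fsi j ≤ 6*m then 4*((fsi j - 1) % 6) else 4*(fsi j - 6*m - 1)) +
  (if j % 2 = 1 then 0 else 2)

/-- the balanced companion family: m blocks of the size-6 gadget followed by
one block of the size-r gadget -/
def FS (m r j : ℕ) : Finset ℕ :=
  {fsc m j + entv (fss m r j) (fsk m j), fsc m j + entv (fss m r j) (fsk m j + 1)}

lemma FS_odd (m r i : ℕ) (h1 : 1 ≤ i) (h2 : i ≤ 6*m) :
    FS m r (2*i-1) = {24*((i-1)/6) + entv 6 (4*((i-1)%6)),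
                      24*((i-1)/6) + entv 6 (4*((i-1)%6)+1)} := by
  have hfsi : fsi (2*i-1) = i := by unfold fsi; omega
  unfold FS fsc fss fsk
  rw [hfsi, if_pos h2, if_pos h2, if_pos h2, if_pos (show (2*i-1) % 2 = 1 by omega)]
  simp

lemma FS_even (m r i : ℕ) (h1 : 1 ≤ i) (h2 : i ≤ 6*m) :
    FS m r (2*i) = {24*((i-1)/6) + entv 6 (4*((i-1)%6)+2),
                    24*((i-1)/6) + entv 6 (4*((i-1)%6)+2+1)} := by
  have hfsi : fsi (2*i) = i := by unfold fsi; omega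
  unfold FS fsc fss fsk
  rw [hfsi, if_pos h2, if_pos h2, if_pos h2, if_neg (show ¬((2*i) % 2 = 1) by omega)]

lemma FS_odd_last (m r i : ℕ) (h2 : 6*m < i) :
    FS m r (2*i-1) = {24*m + entv r (4*(i-6*m-1)),
                      24*m + entv r (4*(i-6*m-1)+1)} := by
  have h1 : 1 ≤ i := by omega
  have hfsi : fsi (2*i-1) = i := by unfold fsi; omega
  unfold FS fsc fss fsk
  rw [hfsi, if_neg (by omega), if_neg (by omega), if_neg (by omega),
     if_pos (show (2*i-1) % 2 = 1 by omega)]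
  simp

lemma FS_even_last (m r i : ℕ) (h2 : 6*m < i) :
    FS m r (2*i) = {24*m + entv r (4*(i-6*m-1)+2),
                    24*m + entv r (4*(i-6*m-1)+2+1)} := by
  have hfsi : fsi (2*i) = i := by unfold fsi; omega
  unfold FS fsc fss fsk
  rw [hfsi, if_neg (by omega), if_neg (by omega), if_neg (by omega),
     if_neg (show ¬((2*i) % 2 = 1) by omega)]

lemma fsi_bounds (t j : ℕ) (hj1 : 1 ≤ j) (hj2 : j ≤ 2*(t+1)) :
    1 ≤ fsi j ∧ fsi j ≤ t+1 := by unfold fsi; omega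

lemma FS_shape (m r t : ℕ) (hmr : 6*m+r = t+1) (hr : r < 6) (j : ℕ)
    (hj1 : 1 ≤ j) (hj2 : j ≤ 2*(t+1)) :
    fss m r j ≤ 6 ∧ fsk m j + 1 < 4 * fss m r j ∧ fsc m j + 4 * fss m r j ≤ 4*(t+1) := by
  unfold fss fsc fsk fsi
  split_ifs with h1 h2 <;> omega

lemma FS_mem (m r j x : ℕ) : x ∈ FS m r j ↔
    x = fsc m j + entv (fss m r j) (fsk m j) ∨
    x = fsc m j + entv (fss m r j) (fsk m j + 1) := by
  simp [FS]

lemma FS_family (m r t : ℕ) (hmr : 6*m+r = t+1) (hr : r < 6) (ht : 3 ≤ t+1) :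
    IsBalancedCompanionFamily t (FS m r) := by
  have h2t : 2*t+2 = 2*(t+1) := by ring
  refine ⟨?_, ?_, ?_, ?_⟩
  · -- subsets and cards
    intro j hj
    rw [Finset.mem_Icc, h2t] at hj
    obtain ⟨hs6, hsk, hsc⟩ := FS_shape m r t hmr hr j hj.1 hj.2
    obtain ⟨he1, he2⟩ := gF2 _ hs6 (fsk m j) (by omega)
    obtain ⟨he1', he2'⟩ := gF2 _ hs6 (fsk m j + 1) hsk
    constructor
    · intro x hx
      rw [FS_mem] at hx
      rw [Finset.mem_Icc]
      rcases hx with rfl | rfl <;> omega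
    · rw [FS, Finset.card_insert_of_notMem, Finset.card_singleton]
      rw [Finset.mem_singleton]
      intro hcontra
      exact gF3 _ hs6 (fsk m j) (by omega) (fsk m j + 1) hsk (by omega) (by omega)
  · -- disjointness
    intro j hj j' hj' hne
    rw [Finset.mem_Icc, h2t] at hj hj'
    obtain ⟨hs6, hsk, hsc⟩ := FS_shape m r t hmr hr j hj.1 hj.2
    obtain ⟨hs6', hsk', hsc'⟩ := FS_shape m r t hmr hr j' hj'.1 hj'.2
    rw [Finset.disjoint_left]
    intro x hx hx'
    rw [FS_mem] at hx hx'
    -- case: same offset or not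
    by_cases hcc : fsc m j = fsc m j'
    · -- same block: same size and different element indices
      have hss : fss m r j = fss m r j' := by
        unfold fsc fss at *; split_ifs at * <;> omega
      have hkk : fsk m j ≠ fsk m j' ∧ fsk m j % 2 = 0 ∧ fsk m j' % 2 = 0 := by
        unfold fsc fsk fsi at *
        split_ifs at * <;> omega
      have key : ∀ k k', k < 4 * fss m r j → k' < 4 * fss m r j →
          x = fsc m j + entv (fss m r j) k → x = fsc m j' + entv (fss m r j') k' →
          k = k' := by
        intro k k' hk hk' hxk hxk'
        by_contra hkne
        rw [hss] at hxk
        rw [← hcc] at hxk'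
        have : entv (fss m r j') k = entv (fss m r j') k' := by omega
        exact gF3 _ (hss ▸ hs6) _ (hss ▸ hk) _ (hss ▸ hk') hkne this
      rcases hx with rfl | h2 <;> rcases hx' with h1' | h2'
      · have := key _ _ (by omega) (by omega) rfl h1'; omega
      · have := key _ _ (by omega) (by omega) rfl h2'; omega
      · have := key _ _ (by omega) (by omega) h2 h1'; omega
      · have := key _ _ (by omega) (by omega) h2 h2'; omega
    · -- different blocks: disjoint intervals
      have hint : fsc m j + 4 * fss m r j ≤ fsc m j' ∨ fsc m j' + 4 * fss m r j' ≤ fsc m j := by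
        unfold fsc fss fsi at *
        split_ifs at * <;> omega
      obtain ⟨ha1, ha2⟩ := gF2 _ hs6 (fsk m j) (by omega)
      obtain ⟨hb1, hb2⟩ := gF2 _ hs6 (fsk m j + 1) hsk
      obtain ⟨ha1', ha2'⟩ := gF2 _ hs6' (fsk m j') (by omega)
      obtain ⟨hb1', hb2'⟩ := gF2 _ hs6' (fsk m j' + 1) hsk'
      rcases hx with rfl | h2 <;> rcases hx' with h1' | h2' <;> omega
  · -- union
    apply Finset.Subset.antisymm
    · intro x hx
      rw [Finset.mem_biUnion] at hx
      obtain ⟨j, hj, hxj⟩ := hx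
      rw [Finset.mem_Icc, h2t] at hj
      obtain ⟨hs6, hsk, hsc⟩ := FS_shape m r t hmr hr j hj.1 hj.2
      obtain ⟨ha1, ha2⟩ := gF2 _ hs6 (fsk m j) (by omega)
      obtain ⟨hb1, hb2⟩ := gF2 _ hs6 (fsk m j + 1) hsk
      rw [FS_mem] at hxj
      rw [Finset.mem_Icc]
      rcases hxj with rfl | rfl <;> omega
    · intro x hx
      rw [Finset.mem_Icc] at hx
      rw [Finset.mem_biUnion]
      by_cases hxm : x ≤ 24*m
      · -- main blocks
        have hb : (x-1)/24 < m := by omega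
        set b := (x-1)/24 with hbdef
        obtain ⟨k, hk24, hke⟩ := gF4 6 (by norm_num) (x - 24*b) (by omega) (by omega)
        set i := 6*b + k/4 + 1 with hidef
        have hi1 : 1 ≤ i := by omega
        have hi2 : i ≤ 6*m := by omega
        have hdiv : (i-1)/6 = b := by omega
        have hmod : (i-1)%6 = k/4 := by omega
        rcases (show k%4 = 0 ∨ k%4 = 1 ∨ k%4 = 2 ∨ k%4 = 3 by omega) with h|h|h|h
        · exact ⟨2*i-1, by rw [Finset.mem_Icc]; omega, by
            rw [FS_odd m r i hi1 hi2, hdiv, hmod, show 4*(k/4) = k by omega]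
            simp only [Finset.mem_insert, Finset.mem_singleton]
            left; rw [hke]; omega⟩
        · exact ⟨2*i-1, by rw [Finset.mem_Icc]; omega, by
            rw [FS_odd m r i hi1 hi2, hdiv, hmod, show 4*(k/4)+1 = k by omega]
            simp only [Finset.mem_insert, Finset.mem_singleton]
            right; rw [hke]; omega⟩
        · exact ⟨2*i, by rw [Finset.mem_Icc]; omega, by
            rw [FS_even m r i hi1 hi2, hdiv, hmod, show 4*(k/4)+2 = k by omega]
            simp only [Finset.mem_insert, Finset.mem_singleton]
            left; rw [hke]; omega⟩
        · exact ⟨2*i, by rw [Finset.mem_Icc]; omega, by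
            rw [FS_even m r i hi1 hi2, hdiv, hmod, show 4*(k/4)+2+1 = k by omega]
            simp only [Finset.mem_insert, Finset.mem_singleton]
            right; rw [hke]; omega⟩
      · -- last block
        obtain ⟨k, hk4r, hke⟩ := gF4 r (by omega) (x - 24*m) (by omega) (by omega)
        set i := 6*m + k/4 + 1 with hidef
        have hi2 : 6*m < i := by omega
        have hl : i - 6*m - 1 = k/4 := by omega
        rcases (show k%4 = 0 ∨ k%4 = 1 ∨ k%4 = 2 ∨ k%4 = 3 by omega) with h|h|h|h
        · exact ⟨2*i-1, by rw [Finset.mem_Icc]; omega, by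
            rw [FS_odd_last m r i hi2, hl, show 4*(k/4) = k by omega]
            simp only [Finset.mem_insert, Finset.mem_singleton]
            left; rw [hke]; omega⟩
        · exact ⟨2*i-1, by rw [Finset.mem_Icc]; omega, by
            rw [FS_odd_last m r i hi2, hl, show 4*(k/4)+1 = k by omega]
            simp only [Finset.mem_insert, Finset.mem_singleton]
            right; rw [hke]; omega⟩
        · exact ⟨2*i, by rw [Finset.mem_Icc]; omega, by
            rw [FS_even_last m r i hi2, hl, show 4*(k/4)+2 = k by omega]
            simp only [Finset.mem_insert, Finset.mem_singleton]
            left; rw [hke]; omega⟩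
        · exact ⟨2*i, by rw [Finset.mem_Icc]; omega, by
            rw [FS_even_last m r i hi2, hl, show 4*(k/4)+2+1 = k by omega]
            simp only [Finset.mem_insert, Finset.mem_singleton]
            right; rw [hke]; omega⟩
  · -- equal sums
    intro i hi
    rw [Finset.mem_Icc] at hi
    by_cases him : i ≤ 6*m
    · rw [FS_odd m r i hi.1 him, FS_even m r i hi.1 him]
      have hl6 : (i-1)%6 < 6 := by omega
      have h5 := gF5 6 (by norm_num) ((i-1)%6) hl6
      have d1 := gF3 6 (by norm_num) (4*((i-1)%6)) (by omega) (4*((i-1)%6)+1) (by omega) (by omega)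
      have d2 := gF3 6 (by norm_num) (4*((i-1)%6)+2) (by omega) (4*((i-1)%6)+2+1) (by omega) (by omega)
      rw [Finset.sum_pair (by omega), Finset.sum_pair (by omega),
        show 4*((i-1)%6)+2+1 = 4*((i-1)%6)+3 by omega]
      simp only [id]
      omega
    · rw [FS_odd_last m r i (by omega), FS_even_last m r i (by omega)]
      have hl : i - 6*m - 1 < r := by omega
      have h5 := gF5 r (by omega) (i-6*m-1) hl
      have d1 := gF3 r (by omega) (4*(i-6*m-1)) (by omega) (4*(i-6*m-1)+1) (by omega) (by omega)
      have d2 := gF3 r (by omega) (4*(i-6*m-1)+2) (by omega) (4*(i-6*m-1)+2+1) (by omega) (by omega)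
      rw [Finset.sum_pair (by omega), Finset.sum_pair (by omega),
        show 4*(i-6*m-1)+2+1 = 4*(i-6*m-1)+3 by omega]
      simp only [id]
      omega


/-- indicator (as an integer) that `π` swaps `j` and `j+1` -/
def esw (t : ℕ) (π : ℕ → ℕ) (j : ℕ) : ℤ :=
  if 1 ≤ j ∧ j+1 ≤ 4*(t+1) ∧ π j = j+1 then 1 else 0

lemma esw01 (t : ℕ) (π : ℕ → ℕ) : ∀ j, esw t π j = 0 ∨ esw t π j = 1 := by
  intro j; unfold esw; split_ifs <;> simp

lemma esw_zero0 (t : ℕ) (π : ℕ → ℕ) : esw t π 0 = 0 := by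
  unfold esw; rw [if_neg]; rintro ⟨h, -, -⟩; omega

lemma esw_zeroV (t : ℕ) (π : ℕ → ℕ) (j : ℕ) (hj : 4*(t+1) ≤ j) : esw t π j = 0 := by
  unfold esw; rw [if_neg]; rintro ⟨-, h, -⟩; omega

lemma esw_adj (t : ℕ) (π : ℕ → ℕ) (hπ : IsSwapCollection (4*(t+1)) 1 π) :
    ∀ j, esw t π j * esw t π (j+1) = 0 := by
  obtain ⟨hmem, hinv, hmag⟩ := hπ
  intro j; unfold esw
  split_ifs with h1 h2
  · exfalso
    have := hinv j (Finset.mem_Icc.mpr ⟨h1.1, by omega⟩)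
    rw [h1.2.2] at this
    have h22 := h2.2.2
    omega
  all_goals simp

lemma esw_pi (t : ℕ) (π : ℕ → ℕ) (hπ : IsSwapCollection (4*(t+1)) 1 π) :
    ∀ x y : ℕ, x = y + 1 → 1 ≤ x → x ≤ 4*(t+1) →
      (π x : ℤ) = (x:ℤ) + esw t π x - esw t π y := by
  obtain ⟨hmem, hinv, hmag⟩ := hπ
  rintro x y rfl h1 h2
  have hm := hmem (y+1) (Finset.mem_Icc.mpr ⟨h1, h2⟩)
  rw [Finset.mem_Icc] at hm
  have habs := hmag (y+1) (Finset.mem_Icc.mpr ⟨h1, h2⟩)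
  rw [abs_le] at habs
  have hcase : π (y+1) = y+2 ∨ π (y+1) = y+1 ∨ π (y+1) = y := by omega
  rcases hcase with hx | hx | hx
  · have hex : esw t π (y+1) = 1 := by
      unfold esw; rw [if_pos ⟨h1, by omega, hx⟩]
    have hey : esw t π y = 0 := by
      unfold esw; rw [if_neg]
      rintro ⟨hy1, hy2, hy3⟩
      have := hinv y (Finset.mem_Icc.mpr ⟨hy1, by omega⟩)
      rw [hy3] at this
      omega
    rw [hex, hey, hx]; push_cast; ring
  · have hex : esw t π (y+1) = 0 := by
      unfold esw; rw [if_neg]; rintro ⟨-, -, h⟩; omega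
    have hey : esw t π y = 0 := by
      unfold esw; rw [if_neg]
      rintro ⟨hy1, hy2, hy3⟩
      have := hinv y (Finset.mem_Icc.mpr ⟨hy1, by omega⟩)
      rw [hy3] at this
      omega
    rw [hex, hey, hx]; push_cast; ring
  · have hex : esw t π (y+1) = 0 := by
      unfold esw; rw [if_neg]; rintro ⟨-, -, h⟩; omega
    have hey : esw t π y = 1 := by
      have hy1 : 1 ≤ y := by omega
      have hpy : π y = y + 1 := by
        have := hinv (y+1) (Finset.mem_Icc.mpr ⟨h1, h2⟩)
        rw [hx] at this
        omega
      unfold esw; rw [if_pos ⟨hy1, by omega, hpy⟩]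
    rw [hex, hey, hx]; push_cast; ring

lemma sum_Icc_one (f : ℕ → ℤ) (n : ℕ) :
    ∑ i ∈ Finset.Icc 1 n, f i = ∑ i ∈ Finset.range n, f (i+1) := by
  induction n with
  | zero => simp
  | succ n ih =>
    rw [Finset.sum_Icc_succ_top (by omega), ih, Finset.sum_range_succ]

lemma sum_range_addd (f : ℕ → ℤ) (a b : ℕ) :
    ∑ i ∈ Finset.range (a+b), f i
      = ∑ i ∈ Finset.range a, f i + ∑ i ∈ Finset.range b, f (a+i) := by
  induction b with
  | zero => simp
  | succ b ih =>
    rw [show a+(b+1) = (a+b)+1 by ring, Finset.sum_range_succ, ih, Finset.sum_range_succ]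
    ring

lemma main6 (M : ℕ) (e g : ℕ → ℤ) (hε : ∀ j, e j = 0 ∨ e j = 1) (he0 : e 0 = 0)
    (hblock : ∀ b, b < M → ∑ i ∈ Finset.range 6, g (6*b+i+1) ≤ 10 + e (24*b) + e (24*b+24))
    (hM : 1 ≤ M) :
    ∑ i ∈ Finset.range (6*M), g (i+1) ≤ 12*(M:ℤ) - 2 + e (24*M) := by
  induction M, hM using Nat.le_induction with
  | base =>
    have h0 := hblock 0 (by omega)
    have : ∑ i ∈ Finset.range (6*1), g (i+1) = ∑ i ∈ Finset.range 6, g (6*0+i+1) := by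
      apply Finset.sum_congr (by norm_num)
      intro i _
      congr 1
      omega
    rw [this, show (24:ℕ)*0 = 0 by norm_num] at *
    rw [show (24:ℕ)*1 = 24 by norm_num]
    rw [he0] at h0
    push_cast
    linarith
  | succ M hM ih =>
    rw [show 6*(M+1) = 6*M+6 by ring, sum_range_addd]
    have hb := hblock M (by omega)
    have hIH := ih (fun b hb' => hblock b (by omega))
    rcases hε (24*M) with h24 | h24 <;>
      rw [h24] at hb hIH <;>
      rw [show 24*(M+1) = 24*M+24 by ring] <;>
      push_cast <;>
      linarith

lemma mainblock (t m r : ℕ) (π : ℕ → ℕ) (hπ : IsSwapCollection (4*(t+1)) 1 π) (hmr : 6*m+r = t+1) (b : ℕ) (hb : b < m) :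
    ∑ i ∈ Finset.range 6, |((FS m r (2*(6*b+i+1)-1)).sum fun x => (π x : ℤ))
      - ((FS m r (2*(6*b+i+1))).sum fun x => (π x : ℤ))|
      ≤ 10 + esw t π (24*b) + esw t π (24*b+24) := by
  have hε := esw01 t π
  have hadj := esw_adj t π hπ
  have hpi := esw_pi t π hπ
  have hSo1 : FS m r (2*(6*b+1)-1) = {24*b+7, 24*b+20} := by
    rw [FS_odd m r (6*b+1) (by omega) (by omega), show (6*b+1-1)/6 = b by omega, show (6*b+1-1)%6 = 0 by omega,
      show entv 6 (4*0) = 7 by decide, show entv 6 (4*0+1) = 20 by decide]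
  have hSe1 : FS m r (2*(6*b+1)) = {24*b+10, 24*b+17} := by
    rw [FS_even m r (6*b+1) (by omega) (by omega), show (6*b+1-1)/6 = b by omega, show (6*b+1-1)%6 = 0 by omega,
      show entv 6 (4*0+2) = 10 by decide, show entv 6 (4*0+2+1) = 17 by decide]
  have hSo2 : FS m r (2*(6*b+2)-1) = {24*b+1, 24*b+24} := by
    rw [FS_odd m r (6*b+2) (by omega) (by omega), show (6*b+2-1)/6 = b by omega, show (6*b+2-1)%6 = 1 by omega,
      show entv 6 (4*1) = 1 by decide, show entv 6 (4*1+1) = 24 by decide]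
  have hSe2 : FS m r (2*(6*b+2)) = {24*b+12, 24*b+13} := by
    rw [FS_even m r (6*b+2) (by omega) (by omega), show (6*b+2-1)/6 = b by omega, show (6*b+2-1)%6 = 1 by omega,
      show entv 6 (4*1+2) = 12 by decide, show entv 6 (4*1+2+1) = 13 by decide]
  have hSo3 : FS m r (2*(6*b+3)-1) = {24*b+3, 24*b+8} := by
    rw [FS_odd m r (6*b+3) (by omega) (by omega), show (6*b+3-1)/6 = b by omega, show (6*b+3-1)%6 = 2 by omega,
      show entv 6 (4*2) = 3 by decide, show entv 6 (4*2+1) = 8 by decide]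
  have hSe3 : FS m r (2*(6*b+3)) = {24*b+5, 24*b+6} := by
    rw [FS_even m r (6*b+3) (by omega) (by omega), show (6*b+3-1)/6 = b by omega, show (6*b+3-1)%6 = 2 by omega,
      show entv 6 (4*2+2) = 5 by decide, show entv 6 (4*2+2+1) = 6 by decide]
  have hSo4 : FS m r (2*(6*b+4)-1) = {24*b+4, 24*b+9} := by
    rw [FS_odd m r (6*b+4) (by omega) (by omega), show (6*b+4-1)/6 = b by omega, show (6*b+4-1)%6 = 3 by omega,
      show entv 6 (4*3) = 4 by decide, show entv 6 (4*3+1) = 9 by decide]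
  have hSe4 : FS m r (2*(6*b+4)) = {24*b+2, 24*b+11} := by
    rw [FS_even m r (6*b+4) (by omega) (by omega), show (6*b+4-1)/6 = b by omega, show (6*b+4-1)%6 = 3 by omega,
      show entv 6 (4*3+2) = 2 by decide, show entv 6 (4*3+2+1) = 11 by decide]
  have hSo5 : FS m r (2*(6*b+5)-1) = {24*b+15, 24*b+22} := by
    rw [FS_odd m r (6*b+5) (by omega) (by omega), show (6*b+5-1)/6 = b by omega, show (6*b+5-1)%6 = 4 by omega,
      show entv 6 (4*4) = 15 by decide, show entv 6 (4*4+1) = 22 by decide]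
  have hSe5 : FS m r (2*(6*b+5)) = {24*b+18, 24*b+19} := by
    rw [FS_even m r (6*b+5) (by omega) (by omega), show (6*b+5-1)/6 = b by omega, show (6*b+5-1)%6 = 4 by omega,
      show entv 6 (4*4+2) = 18 by decide, show entv 6 (4*4+2+1) = 19 by decide]
  have hSo6 : FS m r (2*(6*b+6)-1) = {24*b+14, 24*b+23} := by
    rw [FS_odd m r (6*b+6) (by omega) (by omega), show (6*b+6-1)/6 = b by omega, show (6*b+6-1)%6 = 5 by omega,
      show entv 6 (4*5) = 14 by decide, show entv 6 (4*5+1) = 23 by decide]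
  have hSe6 : FS m r (2*(6*b+6)) = {24*b+16, 24*b+21} := by
    rw [FS_even m r (6*b+6) (by omega) (by omega), show (6*b+6-1)/6 = b by omega, show (6*b+6-1)%6 = 5 by omega,
      show entv 6 (4*5+2) = 16 by decide, show entv 6 (4*5+2+1) = 21 by decide]
  have hD1 : ((FS m r (2*(6*b+1)-1)).sum fun x => (π x : ℤ)) - ((FS m r (2*(6*b+1))).sum fun x => (π x : ℤ))
      = (((esw t π (24*b+7) - esw t π (24*b+6)) + (esw t π (24*b+20) - esw t π (24*b+19))) - ((esw t π (24*b+10) - esw t π (24*b+9)) + (esw t π (24*b+17) - esw t π (24*b+16)))) := by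
    rw [hSo1, hSe1, Finset.sum_pair (show (24*b+7 : ℕ) ≠ 24*b+20 by omega),
      Finset.sum_pair (show (24*b+10 : ℕ) ≠ 24*b+17 by omega),
      hpi (24*b+7) (24*b+6) (by omega) (by omega) (by omega),
      hpi (24*b+20) (24*b+19) (by omega) (by omega) (by omega),
      hpi (24*b+10) (24*b+9) (by omega) (by omega) (by omega),
      hpi (24*b+17) (24*b+16) (by omega) (by omega) (by omega)]
    push_cast
    ring
  have hD2 : ((FS m r (2*(6*b+2)-1)).sum fun x => (π x : ℤ)) - ((FS m r (2*(6*b+2))).sum fun x => (π x : ℤ))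
      = (((esw t π (24*b+1) - esw t π (24*b+0)) + (esw t π (24*b+24) - esw t π (24*b+23))) - ((esw t π (24*b+12) - esw t π (24*b+11)) + (esw t π (24*b+13) - esw t π (24*b+12)))) := by
    rw [hSo2, hSe2, Finset.sum_pair (show (24*b+1 : ℕ) ≠ 24*b+24 by omega),
      Finset.sum_pair (show (24*b+12 : ℕ) ≠ 24*b+13 by omega),
      hpi (24*b+1) (24*b+0) (by omega) (by omega) (by omega),
      hpi (24*b+24) (24*b+23) (by omega) (by omega) (by omega),
      hpi (24*b+12) (24*b+11) (by omega) (by omega) (by omega),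
      hpi (24*b+13) (24*b+12) (by omega) (by omega) (by omega)]
    push_cast
    ring
  have hD3 : ((FS m r (2*(6*b+3)-1)).sum fun x => (π x : ℤ)) - ((FS m r (2*(6*b+3))).sum fun x => (π x : ℤ))
      = (((esw t π (24*b+3) - esw t π (24*b+2)) + (esw t π (24*b+8) - esw t π (24*b+7))) - ((esw t π (24*b+5) - esw t π (24*b+4)) + (esw t π (24*b+6) - esw t π (24*b+5)))) := by
    rw [hSo3, hSe3, Finset.sum_pair (show (24*b+3 : ℕ) ≠ 24*b+8 by omega),
      Finset.sum_pair (show (24*b+5 : ℕ) ≠ 24*b+6 by omega),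
      hpi (24*b+3) (24*b+2) (by omega) (by omega) (by omega),
      hpi (24*b+8) (24*b+7) (by omega) (by omega) (by omega),
      hpi (24*b+5) (24*b+4) (by omega) (by omega) (by omega),
      hpi (24*b+6) (24*b+5) (by omega) (by omega) (by omega)]
    push_cast
    ring
  have hD4 : ((FS m r (2*(6*b+4)-1)).sum fun x => (π x : ℤ)) - ((FS m r (2*(6*b+4))).sum fun x => (π x : ℤ))
      = (((esw t π (24*b+4) - esw t π (24*b+3)) + (esw t π (24*b+9) - esw t π (24*b+8))) - ((esw t π (24*b+2) - esw t π (24*b+1)) + (esw t π (24*b+11) - esw t π (24*b+10)))) := by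
    rw [hSo4, hSe4, Finset.sum_pair (show (24*b+4 : ℕ) ≠ 24*b+9 by omega),
      Finset.sum_pair (show (24*b+2 : ℕ) ≠ 24*b+11 by omega),
      hpi (24*b+4) (24*b+3) (by omega) (by omega) (by omega),
      hpi (24*b+9) (24*b+8) (by omega) (by omega) (by omega),
      hpi (24*b+2) (24*b+1) (by omega) (by omega) (by omega),
      hpi (24*b+11) (24*b+10) (by omega) (by omega) (by omega)]
    push_cast
    ring
  have hD5 : ((FS m r (2*(6*b+5)-1)).sum fun x => (π x : ℤ)) - ((FS m r (2*(6*b+5))).sum fun x => (π x : ℤ))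
      = (((esw t π (24*b+15) - esw t π (24*b+14)) + (esw t π (24*b+22) - esw t π (24*b+21))) - ((esw t π (24*b+18) - esw t π (24*b+17)) + (esw t π (24*b+19) - esw t π (24*b+18)))) := by
    rw [hSo5, hSe5, Finset.sum_pair (show (24*b+15 : ℕ) ≠ 24*b+22 by omega),
      Finset.sum_pair (show (24*b+18 : ℕ) ≠ 24*b+19 by omega),
      hpi (24*b+15) (24*b+14) (by omega) (by omega) (by omega),
      hpi (24*b+22) (24*b+21) (by omega) (by omega) (by omega),
      hpi (24*b+18) (24*b+17) (by omega) (by omega) (by omega),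
      hpi (24*b+19) (24*b+18) (by omega) (by omega) (by omega)]
    push_cast
    ring
  have hD6 : ((FS m r (2*(6*b+6)-1)).sum fun x => (π x : ℤ)) - ((FS m r (2*(6*b+6))).sum fun x => (π x : ℤ))
      = (((esw t π (24*b+14) - esw t π (24*b+13)) + (esw t π (24*b+23) - esw t π (24*b+22))) - ((esw t π (24*b+16) - esw t π (24*b+15)) + (esw t π (24*b+21) - esw t π (24*b+20)))) := by
    rw [hSo6, hSe6, Finset.sum_pair (show (24*b+14 : ℕ) ≠ 24*b+23 by omega),
      Finset.sum_pair (show (24*b+16 : ℕ) ≠ 24*b+21 by omega),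
      hpi (24*b+14) (24*b+13) (by omega) (by omega) (by omega),
      hpi (24*b+23) (24*b+22) (by omega) (by omega) (by omega),
      hpi (24*b+16) (24*b+15) (by omega) (by omega) (by omega),
      hpi (24*b+21) (24*b+20) (by omega) (by omega) (by omega)]
    push_cast
    ring
  simp only [Finset.sum_range_succ, Finset.sum_range_zero, zero_add]
  rw [show 6*b+0+1 = 6*b+1 by omega, show 6*b+1+1 = 6*b+2 by omega, show 6*b+2+1 = 6*b+3 by omega, show 6*b+3+1 = 6*b+4 by omega, show 6*b+4+1 = 6*b+5 by omega, show 6*b+5+1 = 6*b+6 by omega]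
  rw [hD1, hD2, hD3, hD4, hD5, hD6]
  exact block6 (24*b) (esw t π) hε hadj


lemma lastblock1 (t m : ℕ) (π : ℕ → ℕ) (hπ : IsSwapCollection (4*(t+1)) 1 π) (hmr : 6*m+1 = t+1) :
    ∑ i ∈ Finset.range 1, |((FS m 1 (2*(6*m+i+1)-1)).sum fun x => (π x : ℤ))
      - ((FS m 1 (2*(6*m+i+1))).sum fun x => (π x : ℤ))|
      ≤ 2 + esw t π (24*m) + esw t π (24*m+4) := by
  have hε := esw01 t π
  have hadj := esw_adj t π hπ
  have hpi := esw_pi t π hπ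
  have hSo1 : FS m 1 (2*(6*m+1)-1) = {24*m+1, 24*m+4} := by
    rw [FS_odd_last m 1 (6*m+1) (by omega), show (6*m+1-6*m-1) = 0 by omega,
      show entv 1 (4*0) = 1 by decide, show entv 1 (4*0+1) = 4 by decide]
  have hSe1 : FS m 1 (2*(6*m+1)) = {24*m+2, 24*m+3} := by
    rw [FS_even_last m 1 (6*m+1) (by omega), show (6*m+1-6*m-1) = 0 by omega,
      show entv 1 (4*0+2) = 2 by decide, show entv 1 (4*0+2+1) = 3 by decide]
  have hD1 : ((FS m 1 (2*(6*m+1)-1)).sum fun x => (π x : ℤ)) - ((FS m 1 (2*(6*m+1))).sum fun x => (π x : ℤ))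
      = (((esw t π (24*m+1) - esw t π (24*m+0)) + (esw t π (24*m+4) - esw t π (24*m+3))) - ((esw t π (24*m+2) - esw t π (24*m+1)) + (esw t π (24*m+3) - esw t π (24*m+2)))) := by
    rw [hSo1, hSe1, Finset.sum_pair (show (24*m+1 : ℕ) ≠ 24*m+4 by omega),
      Finset.sum_pair (show (24*m+2 : ℕ) ≠ 24*m+3 by omega),
      hpi (24*m+1) (24*m+0) (by omega) (by omega) (by omega),
      hpi (24*m+4) (24*m+3) (by omega) (by omega) (by omega),
      hpi (24*m+2) (24*m+1) (by omega) (by omega) (by omega),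
      hpi (24*m+3) (24*m+2) (by omega) (by omega) (by omega)]
    push_cast
    ring
  simp only [Finset.sum_range_succ, Finset.sum_range_zero, zero_add]
  rw [show 6*m+0+1 = 6*m+1 by omega]
  rw [hD1]
  exact block1 (24*m) (esw t π) hε hadj


lemma lastblock2 (t m : ℕ) (π : ℕ → ℕ) (hπ : IsSwapCollection (4*(t+1)) 1 π) (hmr : 6*m+2 = t+1) :
    ∑ i ∈ Finset.range 2, |((FS m 2 (2*(6*m+i+1)-1)).sum fun x => (π x : ℤ))
      - ((FS m 2 (2*(6*m+i+1))).sum fun x => (π x : ℤ))|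
      ≤ 4 + esw t π (24*m) + esw t π (24*m+8) := by
  have hε := esw01 t π
  have hadj := esw_adj t π hπ
  have hpi := esw_pi t π hπ
  have hSo1 : FS m 2 (2*(6*m+1)-1) = {24*m+1, 24*m+8} := by
    rw [FS_odd_last m 2 (6*m+1) (by omega), show (6*m+1-6*m-1) = 0 by omega,
      show entv 2 (4*0) = 1 by decide, show entv 2 (4*0+1) = 8 by decide]
  have hSe1 : FS m 2 (2*(6*m+1)) = {24*m+3, 24*m+6} := by
    rw [FS_even_last m 2 (6*m+1) (by omega), show (6*m+1-6*m-1) = 0 by omega,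
      show entv 2 (4*0+2) = 3 by decide, show entv 2 (4*0+2+1) = 6 by decide]
  have hSo2 : FS m 2 (2*(6*m+2)-1) = {24*m+2, 24*m+7} := by
    rw [FS_odd_last m 2 (6*m+2) (by omega), show (6*m+2-6*m-1) = 1 by omega,
      show entv 2 (4*1) = 2 by decide, show entv 2 (4*1+1) = 7 by decide]
  have hSe2 : FS m 2 (2*(6*m+2)) = {24*m+4, 24*m+5} := by
    rw [FS_even_last m 2 (6*m+2) (by omega), show (6*m+2-6*m-1) = 1 by omega,
      show entv 2 (4*1+2) = 4 by decide, show entv 2 (4*1+2+1) = 5 by decide]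
  have hD1 : ((FS m 2 (2*(6*m+1)-1)).sum fun x => (π x : ℤ)) - ((FS m 2 (2*(6*m+1))).sum fun x => (π x : ℤ))
      = (((esw t π (24*m+1) - esw t π (24*m+0)) + (esw t π (24*m+8) - esw t π (24*m+7))) - ((esw t π (24*m+3) - esw t π (24*m+2)) + (esw t π (24*m+6) - esw t π (24*m+5)))) := by
    rw [hSo1, hSe1, Finset.sum_pair (show (24*m+1 : ℕ) ≠ 24*m+8 by omega),
      Finset.sum_pair (show (24*m+3 : ℕ) ≠ 24*m+6 by omega),
      hpi (24*m+1) (24*m+0) (by omega) (by omega) (by omega),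
      hpi (24*m+8) (24*m+7) (by omega) (by omega) (by omega),
      hpi (24*m+3) (24*m+2) (by omega) (by omega) (by omega),
      hpi (24*m+6) (24*m+5) (by omega) (by omega) (by omega)]
    push_cast
    ring
  have hD2 : ((FS m 2 (2*(6*m+2)-1)).sum fun x => (π x : ℤ)) - ((FS m 2 (2*(6*m+2))).sum fun x => (π x : ℤ))
      = (((esw t π (24*m+2) - esw t π (24*m+1)) + (esw t π (24*m+7) - esw t π (24*m+6))) - ((esw t π (24*m+4) - esw t π (24*m+3)) + (esw t π (24*m+5) - esw t π (24*m+4)))) := by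
    rw [hSo2, hSe2, Finset.sum_pair (show (24*m+2 : ℕ) ≠ 24*m+7 by omega),
      Finset.sum_pair (show (24*m+4 : ℕ) ≠ 24*m+5 by omega),
      hpi (24*m+2) (24*m+1) (by omega) (by omega) (by omega),
      hpi (24*m+7) (24*m+6) (by omega) (by omega) (by omega),
      hpi (24*m+4) (24*m+3) (by omega) (by omega) (by omega),
      hpi (24*m+5) (24*m+4) (by omega) (by omega) (by omega)]
    push_cast
    ring
  simp only [Finset.sum_range_succ, Finset.sum_range_zero, zero_add]
  rw [show 6*m+0+1 = 6*m+1 by omega, show 6*m+1+1 = 6*m+2 by omega]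
  rw [hD1, hD2]
  exact block2 (24*m) (esw t π) hε hadj


lemma lastblock3 (t m : ℕ) (π : ℕ → ℕ) (hπ : IsSwapCollection (4*(t+1)) 1 π) (hmr : 6*m+3 = t+1) :
    ∑ i ∈ Finset.range 3, |((FS m 3 (2*(6*m+i+1)-1)).sum fun x => (π x : ℤ))
      - ((FS m 3 (2*(6*m+i+1))).sum fun x => (π x : ℤ))|
      ≤ 6 + esw t π (24*m) + esw t π (24*m+12) := by
  have hε := esw01 t π
  have hadj := esw_adj t π hπ
  have hpi := esw_pi t π hπ
  have hSo1 : FS m 3 (2*(6*m+1)-1) = {24*m+1, 24*m+6} := by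
    rw [FS_odd_last m 3 (6*m+1) (by omega), show (6*m+1-6*m-1) = 0 by omega,
      show entv 3 (4*0) = 1 by decide, show entv 3 (4*0+1) = 6 by decide]
  have hSe1 : FS m 3 (2*(6*m+1)) = {24*m+3, 24*m+4} := by
    rw [FS_even_last m 3 (6*m+1) (by omega), show (6*m+1-6*m-1) = 0 by omega,
      show entv 3 (4*0+2) = 3 by decide, show entv 3 (4*0+2+1) = 4 by decide]
  have hSo2 : FS m 3 (2*(6*m+2)-1) = {24*m+2, 24*m+11} := by
    rw [FS_odd_last m 3 (6*m+2) (by omega), show (6*m+2-6*m-1) = 1 by omega,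
      show entv 3 (4*1) = 2 by decide, show entv 3 (4*1+1) = 11 by decide]
  have hSe2 : FS m 3 (2*(6*m+2)) = {24*m+5, 24*m+8} := by
    rw [FS_even_last m 3 (6*m+2) (by omega), show (6*m+2-6*m-1) = 1 by omega,
      show entv 3 (4*1+2) = 5 by decide, show entv 3 (4*1+2+1) = 8 by decide]
  have hSo3 : FS m 3 (2*(6*m+3)-1) = {24*m+7, 24*m+12} := by
    rw [FS_odd_last m 3 (6*m+3) (by omega), show (6*m+3-6*m-1) = 2 by omega,
      show entv 3 (4*2) = 7 by decide, show entv 3 (4*2+1) = 12 by decide]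
  have hSe3 : FS m 3 (2*(6*m+3)) = {24*m+9, 24*m+10} := by
    rw [FS_even_last m 3 (6*m+3) (by omega), show (6*m+3-6*m-1) = 2 by omega,
      show entv 3 (4*2+2) = 9 by decide, show entv 3 (4*2+2+1) = 10 by decide]
  have hD1 : ((FS m 3 (2*(6*m+1)-1)).sum fun x => (π x : ℤ)) - ((FS m 3 (2*(6*m+1))).sum fun x => (π x : ℤ))
      = (((esw t π (24*m+1) - esw t π (24*m+0)) + (esw t π (24*m+6) - esw t π (24*m+5))) - ((esw t π (24*m+3) - esw t π (24*m+2)) + (esw t π (24*m+4) - esw t π (24*m+3)))) := by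
    rw [hSo1, hSe1, Finset.sum_pair (show (24*m+1 : ℕ) ≠ 24*m+6 by omega),
      Finset.sum_pair (show (24*m+3 : ℕ) ≠ 24*m+4 by omega),
      hpi (24*m+1) (24*m+0) (by omega) (by omega) (by omega),
      hpi (24*m+6) (24*m+5) (by omega) (by omega) (by omega),
      hpi (24*m+3) (24*m+2) (by omega) (by omega) (by omega),
      hpi (24*m+4) (24*m+3) (by omega) (by omega) (by omega)]
    push_cast
    ring
  have hD2 : ((FS m 3 (2*(6*m+2)-1)).sum fun x => (π x : ℤ)) - ((FS m 3 (2*(6*m+2))).sum fun x => (π x : ℤ))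
      = (((esw t π (24*m+2) - esw t π (24*m+1)) + (esw t π (24*m+11) - esw t π (24*m+10))) - ((esw t π (24*m+5) - esw t π (24*m+4)) + (esw t π (24*m+8) - esw t π (24*m+7)))) := by
    rw [hSo2, hSe2, Finset.sum_pair (show (24*m+2 : ℕ) ≠ 24*m+11 by omega),
      Finset.sum_pair (show (24*m+5 : ℕ) ≠ 24*m+8 by omega),
      hpi (24*m+2) (24*m+1) (by omega) (by omega) (by omega),
      hpi (24*m+11) (24*m+10) (by omega) (by omega) (by omega),
      hpi (24*m+5) (24*m+4) (by omega) (by omega) (by omega),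
      hpi (24*m+8) (24*m+7) (by omega) (by omega) (by omega)]
    push_cast
    ring
  have hD3 : ((FS m 3 (2*(6*m+3)-1)).sum fun x => (π x : ℤ)) - ((FS m 3 (2*(6*m+3))).sum fun x => (π x : ℤ))
      = (((esw t π (24*m+7) - esw t π (24*m+6)) + (esw t π (24*m+12) - esw t π (24*m+11))) - ((esw t π (24*m+9) - esw t π (24*m+8)) + (esw t π (24*m+10) - esw t π (24*m+9)))) := by
    rw [hSo3, hSe3, Finset.sum_pair (show (24*m+7 : ℕ) ≠ 24*m+12 by omega),
      Finset.sum_pair (show (24*m+9 : ℕ) ≠ 24*m+10 by omega),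
      hpi (24*m+7) (24*m+6) (by omega) (by omega) (by omega),
      hpi (24*m+12) (24*m+11) (by omega) (by omega) (by omega),
      hpi (24*m+9) (24*m+8) (by omega) (by omega) (by omega),
      hpi (24*m+10) (24*m+9) (by omega) (by omega) (by omega)]
    push_cast
    ring
  simp only [Finset.sum_range_succ, Finset.sum_range_zero, zero_add]
  rw [show 6*m+0+1 = 6*m+1 by omega, show 6*m+1+1 = 6*m+2 by omega, show 6*m+2+1 = 6*m+3 by omega]
  rw [hD1, hD2, hD3]
  exact block3 (24*m) (esw t π) hε hadj


lemma lastblock4 (t m : ℕ) (π : ℕ → ℕ) (hπ : IsSwapCollection (4*(t+1)) 1 π) (hmr : 6*m+4 = t+1) :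
    ∑ i ∈ Finset.range 4, |((FS m 4 (2*(6*m+i+1)-1)).sum fun x => (π x : ℤ))
      - ((FS m 4 (2*(6*m+i+1))).sum fun x => (π x : ℤ))|
      ≤ 6 + esw t π (24*m) + esw t π (24*m+16) := by
  have hε := esw01 t π
  have hadj := esw_adj t π hπ
  have hpi := esw_pi t π hπ
  have hSo1 : FS m 4 (2*(6*m+1)-1) = {24*m+1, 24*m+16} := by
    rw [FS_odd_last m 4 (6*m+1) (by omega), show (6*m+1-6*m-1) = 0 by omega,
      show entv 4 (4*0) = 1 by decide, show entv 4 (4*0+1) = 16 by decide]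
  have hSe1 : FS m 4 (2*(6*m+1)) = {24*m+8, 24*m+9} := by
    rw [FS_even_last m 4 (6*m+1) (by omega), show (6*m+1-6*m-1) = 0 by omega,
      show entv 4 (4*0+2) = 8 by decide, show entv 4 (4*0+2+1) = 9 by decide]
  have hSo2 : FS m 4 (2*(6*m+2)-1) = {24*m+3, 24*m+14} := by
    rw [FS_odd_last m 4 (6*m+2) (by omega), show (6*m+2-6*m-1) = 1 by omega,
      show entv 4 (4*1) = 3 by decide, show entv 4 (4*1+1) = 14 by decide]
  have hSe2 : FS m 4 (2*(6*m+2)) = {24*m+6, 24*m+11} := by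
    rw [FS_even_last m 4 (6*m+2) (by omega), show (6*m+2-6*m-1) = 1 by omega,
      show entv 4 (4*1+2) = 6 by decide, show entv 4 (4*1+2+1) = 11 by decide]
  have hSo3 : FS m 4 (2*(6*m+3)-1) = {24*m+2, 24*m+7} := by
    rw [FS_odd_last m 4 (6*m+3) (by omega), show (6*m+3-6*m-1) = 2 by omega,
      show entv 4 (4*2) = 2 by decide, show entv 4 (4*2+1) = 7 by decide]
  have hSe3 : FS m 4 (2*(6*m+3)) = {24*m+4, 24*m+5} := by
    rw [FS_even_last m 4 (6*m+3) (by omega), show (6*m+3-6*m-1) = 2 by omega,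
      show entv 4 (4*2+2) = 4 by decide, show entv 4 (4*2+2+1) = 5 by decide]
  have hSo4 : FS m 4 (2*(6*m+4)-1) = {24*m+10, 24*m+15} := by
    rw [FS_odd_last m 4 (6*m+4) (by omega), show (6*m+4-6*m-1) = 3 by omega,
      show entv 4 (4*3) = 10 by decide, show entv 4 (4*3+1) = 15 by decide]
  have hSe4 : FS m 4 (2*(6*m+4)) = {24*m+12, 24*m+13} := by
    rw [FS_even_last m 4 (6*m+4) (by omega), show (6*m+4-6*m-1) = 3 by omega,
      show entv 4 (4*3+2) = 12 by decide, show entv 4 (4*3+2+1) = 13 by decide]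
  have hD1 : ((FS m 4 (2*(6*m+1)-1)).sum fun x => (π x : ℤ)) - ((FS m 4 (2*(6*m+1))).sum fun x => (π x : ℤ))
      = (((esw t π (24*m+1) - esw t π (24*m+0)) + (esw t π (24*m+16) - esw t π (24*m+15))) - ((esw t π (24*m+8) - esw t π (24*m+7)) + (esw t π (24*m+9) - esw t π (24*m+8)))) := by
    rw [hSo1, hSe1, Finset.sum_pair (show (24*m+1 : ℕ) ≠ 24*m+16 by omega),
      Finset.sum_pair (show (24*m+8 : ℕ) ≠ 24*m+9 by omega),
      hpi (24*m+1) (24*m+0) (by omega) (by omega) (by omega),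
      hpi (24*m+16) (24*m+15) (by omega) (by omega) (by omega),
      hpi (24*m+8) (24*m+7) (by omega) (by omega) (by omega),
      hpi (24*m+9) (24*m+8) (by omega) (by omega) (by omega)]
    push_cast
    ring
  have hD2 : ((FS m 4 (2*(6*m+2)-1)).sum fun x => (π x : ℤ)) - ((FS m 4 (2*(6*m+2))).sum fun x => (π x : ℤ))
      = (((esw t π (24*m+3) - esw t π (24*m+2)) + (esw t π (24*m+14) - esw t π (24*m+13))) - ((esw t π (24*m+6) - esw t π (24*m+5)) + (esw t π (24*m+11) - esw t π (24*m+10)))) := by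
    rw [hSo2, hSe2, Finset.sum_pair (show (24*m+3 : ℕ) ≠ 24*m+14 by omega),
      Finset.sum_pair (show (24*m+6 : ℕ) ≠ 24*m+11 by omega),
      hpi (24*m+3) (24*m+2) (by omega) (by omega) (by omega),
      hpi (24*m+14) (24*m+13) (by omega) (by omega) (by omega),
      hpi (24*m+6) (24*m+5) (by omega) (by omega) (by omega),
      hpi (24*m+11) (24*m+10) (by omega) (by omega) (by omega)]
    push_cast
    ring
  have hD3 : ((FS m 4 (2*(6*m+3)-1)).sum fun x => (π x : ℤ)) - ((FS m 4 (2*(6*m+3))).sum fun x => (π x : ℤ))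
      = (((esw t π (24*m+2) - esw t π (24*m+1)) + (esw t π (24*m+7) - esw t π (24*m+6))) - ((esw t π (24*m+4) - esw t π (24*m+3)) + (esw t π (24*m+5) - esw t π (24*m+4)))) := by
    rw [hSo3, hSe3, Finset.sum_pair (show (24*m+2 : ℕ) ≠ 24*m+7 by omega),
      Finset.sum_pair (show (24*m+4 : ℕ) ≠ 24*m+5 by omega),
      hpi (24*m+2) (24*m+1) (by omega) (by omega) (by omega),
      hpi (24*m+7) (24*m+6) (by omega) (by omega) (by omega),
      hpi (24*m+4) (24*m+3) (by omega) (by omega) (by omega),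
      hpi (24*m+5) (24*m+4) (by omega) (by omega) (by omega)]
    push_cast
    ring
  have hD4 : ((FS m 4 (2*(6*m+4)-1)).sum fun x => (π x : ℤ)) - ((FS m 4 (2*(6*m+4))).sum fun x => (π x : ℤ))
      = (((esw t π (24*m+10) - esw t π (24*m+9)) + (esw t π (24*m+15) - esw t π (24*m+14))) - ((esw t π (24*m+12) - esw t π (24*m+11)) + (esw t π (24*m+13) - esw t π (24*m+12)))) := by
    rw [hSo4, hSe4, Finset.sum_pair (show (24*m+10 : ℕ) ≠ 24*m+15 by omega),
      Finset.sum_pair (show (24*m+12 : ℕ) ≠ 24*m+13 by omega),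
      hpi (24*m+10) (24*m+9) (by omega) (by omega) (by omega),
      hpi (24*m+15) (24*m+14) (by omega) (by omega) (by omega),
      hpi (24*m+12) (24*m+11) (by omega) (by omega) (by omega),
      hpi (24*m+13) (24*m+12) (by omega) (by omega) (by omega)]
    push_cast
    ring
  simp only [Finset.sum_range_succ, Finset.sum_range_zero, zero_add]
  rw [show 6*m+0+1 = 6*m+1 by omega, show 6*m+1+1 = 6*m+2 by omega, show 6*m+2+1 = 6*m+3 by omega, show 6*m+3+1 = 6*m+4 by omega]
  rw [hD1, hD2, hD3, hD4]
  exact block4 (24*m) (esw t π) hε hadj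


lemma lastblock5 (t m : ℕ) (π : ℕ → ℕ) (hπ : IsSwapCollection (4*(t+1)) 1 π) (hmr : 6*m+5 = t+1) :
    ∑ i ∈ Finset.range 5, |((FS m 5 (2*(6*m+i+1)-1)).sum fun x => (π x : ℤ))
      - ((FS m 5 (2*(6*m+i+1))).sum fun x => (π x : ℤ))|
      ≤ 8 + esw t π (24*m) + esw t π (24*m+20) := by
  have hε := esw01 t π
  have hadj := esw_adj t π hπ
  have hpi := esw_pi t π hπ
  have hSo1 : FS m 5 (2*(6*m+1)-1) = {24*m+7, 24*m+14} := by
    rw [FS_odd_last m 5 (6*m+1) (by omega), show (6*m+1-6*m-1) = 0 by omega,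
      show entv 5 (4*0) = 7 by decide, show entv 5 (4*0+1) = 14 by decide]
  have hSe1 : FS m 5 (2*(6*m+1)) = {24*m+1, 24*m+20} := by
    rw [FS_even_last m 5 (6*m+1) (by omega), show (6*m+1-6*m-1) = 0 by omega,
      show entv 5 (4*0+2) = 1 by decide, show entv 5 (4*0+2+1) = 20 by decide]
  have hSo2 : FS m 5 (2*(6*m+2)-1) = {24*m+11, 24*m+12} := by
    rw [FS_odd_last m 5 (6*m+2) (by omega), show (6*m+2-6*m-1) = 1 by omega,
      show entv 5 (4*1) = 11 by decide, show entv 5 (4*1+1) = 12 by decide]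
  have hSe2 : FS m 5 (2*(6*m+2)) = {24*m+4, 24*m+19} := by
    rw [FS_even_last m 5 (6*m+2) (by omega), show (6*m+2-6*m-1) = 1 by omega,
      show entv 5 (4*1+2) = 4 by decide, show entv 5 (4*1+2+1) = 19 by decide]
  have hSo3 : FS m 5 (2*(6*m+3)-1) = {24*m+13, 24*m+18} := by
    rw [FS_odd_last m 5 (6*m+3) (by omega), show (6*m+3-6*m-1) = 2 by omega,
      show entv 5 (4*2) = 13 by decide, show entv 5 (4*2+1) = 18 by decide]
  have hSe3 : FS m 5 (2*(6*m+3)) = {24*m+15, 24*m+16} := by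
    rw [FS_even_last m 5 (6*m+3) (by omega), show (6*m+3-6*m-1) = 2 by omega,
      show entv 5 (4*2+2) = 15 by decide, show entv 5 (4*2+2+1) = 16 by decide]
  have hSo4 : FS m 5 (2*(6*m+4)-1) = {24*m+5, 24*m+6} := by
    rw [FS_odd_last m 5 (6*m+4) (by omega), show (6*m+4-6*m-1) = 3 by omega,
      show entv 5 (4*3) = 5 by decide, show entv 5 (4*3+1) = 6 by decide]
  have hSe4 : FS m 5 (2*(6*m+4)) = {24*m+3, 24*m+8} := by
    rw [FS_even_last m 5 (6*m+4) (by omega), show (6*m+4-6*m-1) = 3 by omega,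
      show entv 5 (4*3+2) = 3 by decide, show entv 5 (4*3+2+1) = 8 by decide]
  have hSo5 : FS m 5 (2*(6*m+5)-1) = {24*m+9, 24*m+10} := by
    rw [FS_odd_last m 5 (6*m+5) (by omega), show (6*m+5-6*m-1) = 4 by omega,
      show entv 5 (4*4) = 9 by decide, show entv 5 (4*4+1) = 10 by decide]
  have hSe5 : FS m 5 (2*(6*m+5)) = {24*m+2, 24*m+17} := by
    rw [FS_even_last m 5 (6*m+5) (by omega), show (6*m+5-6*m-1) = 4 by omega,
      show entv 5 (4*4+2) = 2 by decide, show entv 5 (4*4+2+1) = 17 by decide]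
  have hD1 : ((FS m 5 (2*(6*m+1)-1)).sum fun x => (π x : ℤ)) - ((FS m 5 (2*(6*m+1))).sum fun x => (π x : ℤ))
      = (((esw t π (24*m+7) - esw t π (24*m+6)) + (esw t π (24*m+14) - esw t π (24*m+13))) - ((esw t π (24*m+1) - esw t π (24*m+0)) + (esw t π (24*m+20) - esw t π (24*m+19)))) := by
    rw [hSo1, hSe1, Finset.sum_pair (show (24*m+7 : ℕ) ≠ 24*m+14 by omega),
      Finset.sum_pair (show (24*m+1 : ℕ) ≠ 24*m+20 by omega),
      hpi (24*m+7) (24*m+6) (by omega) (by omega) (by omega),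
      hpi (24*m+14) (24*m+13) (by omega) (by omega) (by omega),
      hpi (24*m+1) (24*m+0) (by omega) (by omega) (by omega),
      hpi (24*m+20) (24*m+19) (by omega) (by omega) (by omega)]
    push_cast
    ring
  have hD2 : ((FS m 5 (2*(6*m+2)-1)).sum fun x => (π x : ℤ)) - ((FS m 5 (2*(6*m+2))).sum fun x => (π x : ℤ))
      = (((esw t π (24*m+11) - esw t π (24*m+10)) + (esw t π (24*m+12) - esw t π (24*m+11))) - ((esw t π (24*m+4) - esw t π (24*m+3)) + (esw t π (24*m+19) - esw t π (24*m+18)))) := by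
    rw [hSo2, hSe2, Finset.sum_pair (show (24*m+11 : ℕ) ≠ 24*m+12 by omega),
      Finset.sum_pair (show (24*m+4 : ℕ) ≠ 24*m+19 by omega),
      hpi (24*m+11) (24*m+10) (by omega) (by omega) (by omega),
      hpi (24*m+12) (24*m+11) (by omega) (by omega) (by omega),
      hpi (24*m+4) (24*m+3) (by omega) (by omega) (by omega),
      hpi (24*m+19) (24*m+18) (by omega) (by omega) (by omega)]
    push_cast
    ring
  have hD3 : ((FS m 5 (2*(6*m+3)-1)).sum fun x => (π x : ℤ)) - ((FS m 5 (2*(6*m+3))).sum fun x => (π x : ℤ))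
      = (((esw t π (24*m+13) - esw t π (24*m+12)) + (esw t π (24*m+18) - esw t π (24*m+17))) - ((esw t π (24*m+15) - esw t π (24*m+14)) + (esw t π (24*m+16) - esw t π (24*m+15)))) := by
    rw [hSo3, hSe3, Finset.sum_pair (show (24*m+13 : ℕ) ≠ 24*m+18 by omega),
      Finset.sum_pair (show (24*m+15 : ℕ) ≠ 24*m+16 by omega),
      hpi (24*m+13) (24*m+12) (by omega) (by omega) (by omega),
      hpi (24*m+18) (24*m+17) (by omega) (by omega) (by omega),
      hpi (24*m+15) (24*m+14) (by omega) (by omega) (by omega),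
      hpi (24*m+16) (24*m+15) (by omega) (by omega) (by omega)]
    push_cast
    ring
  have hD4 : ((FS m 5 (2*(6*m+4)-1)).sum fun x => (π x : ℤ)) - ((FS m 5 (2*(6*m+4))).sum fun x => (π x : ℤ))
      = (((esw t π (24*m+5) - esw t π (24*m+4)) + (esw t π (24*m+6) - esw t π (24*m+5))) - ((esw t π (24*m+3) - esw t π (24*m+2)) + (esw t π (24*m+8) - esw t π (24*m+7)))) := by
    rw [hSo4, hSe4, Finset.sum_pair (show (24*m+5 : ℕ) ≠ 24*m+6 by omega),
      Finset.sum_pair (show (24*m+3 : ℕ) ≠ 24*m+8 by omega),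
      hpi (24*m+5) (24*m+4) (by omega) (by omega) (by omega),
      hpi (24*m+6) (24*m+5) (by omega) (by omega) (by omega),
      hpi (24*m+3) (24*m+2) (by omega) (by omega) (by omega),
      hpi (24*m+8) (24*m+7) (by omega) (by omega) (by omega)]
    push_cast
    ring
  have hD5 : ((FS m 5 (2*(6*m+5)-1)).sum fun x => (π x : ℤ)) - ((FS m 5 (2*(6*m+5))).sum fun x => (π x : ℤ))
      = (((esw t π (24*m+9) - esw t π (24*m+8)) + (esw t π (24*m+10) - esw t π (24*m+9))) - ((esw t π (24*m+2) - esw t π (24*m+1)) + (esw t π (24*m+17) - esw t π (24*m+16)))) := by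
    rw [hSo5, hSe5, Finset.sum_pair (show (24*m+9 : ℕ) ≠ 24*m+10 by omega),
      Finset.sum_pair (show (24*m+2 : ℕ) ≠ 24*m+17 by omega),
      hpi (24*m+9) (24*m+8) (by omega) (by omega) (by omega),
      hpi (24*m+10) (24*m+9) (by omega) (by omega) (by omega),
      hpi (24*m+2) (24*m+1) (by omega) (by omega) (by omega),
      hpi (24*m+17) (24*m+16) (by omega) (by omega) (by omega)]
    push_cast
    ring
  simp only [Finset.sum_range_succ, Finset.sum_range_zero, zero_add]
  rw [show 6*m+0+1 = 6*m+1 by omega, show 6*m+1+1 = 6*m+2 by omega, show 6*m+2+1 = 6*m+3 by omega, show 6*m+3+1 = 6*m+4 by omega, show 6*m+4+1 = 6*m+5 by omega]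
  rw [hD1, hD2, hD3, hD4, hD5]
  exact block5 (24*m) (esw t π) hε hadj


/-- the additive constant Δ as a function of r = (t+1) % 6 -/
def bval (r : ℕ) : ℤ :=
  if r = 0 then -2 else if r = 1 then 2 else if r = 2 then 4
  else if r = 3 then 6 else if r = 4 then 6 else 8

lemma FS_disc (t : ℕ) (ht : 3 ≤ t+1) (π : ℕ → ℕ) (hπ : IsSwapCollection (4*(t+1)) 1 π)
    (m r : ℕ) (hm : m = (t+1)/6) (hrr : r = (t+1)%6) :
    totalSetDiscrepancy t (FS m r) π ≤ 12*(m:ℤ) + bval r := by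
  have hmr : 6*m+r = t+1 := by omega
  have hr : r < 6 := by omega
  unfold totalSetDiscrepancy
  rw [sum_Icc_one]
  rw [show t+1 = 6*m+r from hmr.symm, sum_range_addd]
  have hmain : ∀ hM : 1 ≤ m,
      ∑ i ∈ Finset.range (6*m), |((FS m r (2*(i+1)-1)).sum fun x => (π x : ℤ))
        - ((FS m r (2*(i+1))).sum fun x => (π x : ℤ))|
      ≤ 12*(m:ℤ) - 2 + esw t π (24*m) := by
    intro hM
    exact main6 m (esw t π)
      (fun i => |((FS m r (2*i-1)).sum fun x => (π x : ℤ))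
        - ((FS m r (2*i)).sum fun x => (π x : ℤ))|)
      (esw01 t π) (esw_zero0 t π)
      (fun b hb => mainblock t m r π hπ hmr b hb) hM
  have h24 := esw01 t π (24*m)
  interval_cases r
  · -- r = 0
    have hM : 1 ≤ m := by omega
    have hV : esw t π (24*m) = 0 := esw_zeroV t π _ (by omega)
    have := hmain hM
    rw [hV] at this
    simp only [Finset.range_zero, Finset.sum_empty, add_zero]
    rw [show bval 0 = -2 by norm_num [bval]]
    linarith
  · -- r = 1
    have hM : 1 ≤ m := by omega
    have hV : esw t π (24*m+4) = 0 := esw_zeroV t π _ (by omega)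
    have h1 := hmain hM
    have h2 := lastblock1 t m π hπ (by omega)
    rw [hV] at h2
    rw [show bval 1 = 2 by norm_num [bval]]
    rcases h24 with h | h <;> rw [h] at h1 h2 <;> linarith
  · -- r = 2
    have hM : 1 ≤ m := by omega
    have hV : esw t π (24*m+8) = 0 := esw_zeroV t π _ (by omega)
    have h1 := hmain hM
    have h2 := lastblock2 t m π hπ (by omega)
    rw [hV] at h2
    rw [show bval 2 = 4 by norm_num [bval]]
    rcases h24 with h | h <;> rw [h] at h1 h2 <;> linarith
  · -- r = 3
    have hV : esw t π (24*m+12) = 0 := esw_zeroV t π _ (by omega)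
    have h2 := lastblock3 t m π hπ (by omega)
    rw [hV] at h2
    rw [show bval 3 = 6 by norm_num [bval]]
    rcases Nat.eq_zero_or_pos m with hm0 | hM
    · subst hm0
      have h0 : esw t π (24*0) = 0 := by
        rw [show 24*0 = 0 by norm_num]; exact esw_zero0 t π
      rw [h0] at h2
      simp only [Nat.mul_zero, Finset.range_zero, Finset.sum_empty, zero_add] at h2 ⊢
      push_cast
      linarith
    · have h1 := hmain hM
      rcases h24 with h | h <;> rw [h] at h1 h2 <;> linarith
  · -- r = 4
    have hV : esw t π (24*m+16) = 0 := esw_zeroV t π _ (by omega)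
    have h2 := lastblock4 t m π hπ (by omega)
    rw [hV] at h2
    rw [show bval 4 = 6 by norm_num [bval]]
    rcases Nat.eq_zero_or_pos m with hm0 | hM
    · subst hm0
      have h0 : esw t π (24*0) = 0 := by
        rw [show 24*0 = 0 by norm_num]; exact esw_zero0 t π
      rw [h0] at h2
      simp only [Nat.mul_zero, Finset.range_zero, Finset.sum_empty, zero_add] at h2 ⊢
      push_cast
      linarith
    · have h1 := hmain hM
      rcases h24 with h | h <;> rw [h] at h1 h2 <;> linarith
  · -- r = 5
    have hV : esw t π (24*m+20) = 0 := esw_zeroV t π _ (by omega)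
    have h2 := lastblock5 t m π hπ (by omega)
    rw [hV] at h2
    rw [show bval 5 = 8 by norm_num [bval]]
    rcases Nat.eq_zero_or_pos m with hm0 | hM
    · subst hm0
      have h0 : esw t π (24*0) = 0 := by
        rw [show 24*0 = 0 by norm_num]; exact esw_zero0 t π
      rw [h0] at h2
      simp only [Nat.mul_zero, Finset.range_zero, Finset.sum_empty, zero_add] at h2 ⊢
      push_cast
      linarith
    · have h1 := hmain hM
      rcases h24 with h | h <;> rw [h] at h1 h2 <;> linarith

/-- Let `t + 1 ≥ 3`, `v = 4(t+1)`, `m = ⌊(t+1)/6⌋`, `m' = v − 24m`. Then there is a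
balanced companion family on `{1,…,v}` whose worst-case total set discrepancy under
magnitude-1 swaps is at most `12m + Δ`, where `Δ = −2, 2, 4, 6, 6, 8` according as
`m' = 0, 4, 8, 12, 16, 20`. -/
theorem concatenated_family_discrepancy_p1 (t : ℕ) (ht : 3 ≤ t + 1) (Δ : ℤ)
    (hΔ : (4*(t+1) - 24*((t+1)/6) = 0 ∧ Δ = -2) ∨
          (4*(t+1) - 24*((t+1)/6) = 4 ∧ Δ = 2) ∨
          (4*(t+1) - 24*((t+1)/6) = 8 ∧ Δ = 4) ∨
          (4*(t+1) - 24*((t+1)/6) = 12 ∧ Δ = 6) ∨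
          (4*(t+1) - 24*((t+1)/6) = 16 ∧ Δ = 6) ∨
          (4*(t+1) - 24*((t+1)/6) = 20 ∧ Δ = 8)) :
    ∃ S : ℕ → Finset ℕ, IsBalancedCompanionFamily t S ∧
      ∀ π : ℕ → ℕ, IsSwapCollection (4*(t+1)) 1 π →
        totalSetDiscrepancy t S π ≤ 12 * (((t+1)/6 : ℕ) : ℤ) + Δ := by
  refine ⟨FS ((t+1)/6) ((t+1)%6), FS_family _ _ t (by omega) (by omega) ht, ?_⟩
  intro π hπ
  have hd := FS_disc t ht π hπ ((t+1)/6) ((t+1)%6) rfl rfl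
  have hΔval : bval ((t+1)%6) = Δ := by
    rcases hΔ with ⟨h1,h2⟩|⟨h1,h2⟩|⟨h1,h2⟩|⟨h1,h2⟩|⟨h1,h2⟩|⟨h1,h2⟩ <;> rw [h2]
    · rw [show (t+1)%6 = 0 by omega]; norm_num [bval]
    · rw [show (t+1)%6 = 1 by omega]; norm_num [bval]
    · rw [show (t+1)%6 = 2 by omega]; norm_num [bval]
    · rw [show (t+1)%6 = 3 by omega]; norm_num [bval]
    · rw [show (t+1)%6 = 4 by omega]; norm_num [bval]
    · rw [show (t+1)%6 = 5 by omega]; norm_num [bval]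
  rw [hΔval] at hd
  exact hd
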